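/- Let B be an m×n real matrix and P an n×n symmetric positive definite matrix, and set E = BP⁻¹Bᵀ. Then EE⁺B = B and E⁺EB = B, where E⁺ is the Moore-Penrose inverse of E. -/

import Mathlib

open Matrix

/-- Over ℝ, `M * Mᵀ = 0` implies `M = 0`. -/
lemma mul_transpose_self_eq_zero' {a b : ℕ} (M : Matrix (Fin a) (Fin b) ℝ)
    (h : M * Mᵀ = 0) : M = 0 := by
  have hT : Mᴴ = Mᵀ := by
    ext i j; simp [Matrix.conjTranspose_apply, Matrix.transpose_apply]
  rw [← hT] at h
  exact (Matrix.self_mul_conjTranspose_eq_zero (A := M)).mp h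

/-- Key algebraic lemma: if `F` is symmetric, absorbs `E = A * Aᵀ` on both
sides, then `F * A = A`. -/
lemma proj_fix {a b : ℕ} (F E : Matrix (Fin a) (Fin a) ℝ)
    (A : Matrix (Fin a) (Fin b) ℝ)
    (hFt : Fᵀ = F) (hFE : F * E = E) (hEF : E * F = E) (hEA : E = A * Aᵀ) :
    F * A = A := by
  have key : (F * A - A) * (F * A - A)ᵀ = 0 := by
    have h1 : (F * A) * (F * A)ᵀ = E := by
      rw [Matrix.transpose_mul, hFt, ← Matrix.mul_assoc, Matrix.mul_assoc F A Aᵀ,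
        ← hEA, hFE, hEF]
    have h2 : (F * A) * Aᵀ = E := by
      rw [Matrix.mul_assoc, ← hEA, hFE]
    have h3 : A * (F * A)ᵀ = E := by
      rw [Matrix.transpose_mul, hFt, ← Matrix.mul_assoc, ← hEA, hEF]
    rw [Matrix.transpose_sub, Matrix.mul_sub, Matrix.sub_mul, Matrix.sub_mul,
      h1, h2, h3, ← hEA]
    abel
  have := mul_transpose_self_eq_zero' _ key
  exact sub_eq_zero.mp this

theorem EEpB_eq_B {m n : ℕ}
    (B : Matrix (Fin m) (Fin n) ℝ) (P : Matrix (Fin n) (Fin n) ℝ)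
    (hP : P.PosDef)
    (E Ep : Matrix (Fin m) (Fin m) ℝ) (hE : E = B * P⁻¹ * Bᵀ)
    (h1 : E * Ep * E = E) (h2 : Ep * E * Ep = Ep)
    (h3 : (E * Ep)ᵀ = E * Ep) (h4 : (Ep * E)ᵀ = Ep * E) :
    E * Ep * B = B ∧ Ep * E * B = B := by
  -- P⁻¹ is positive definite
  have hQ : (P⁻¹).PosDef := hP.inv
  have hQs : (P⁻¹).PosSemidef := hQ.posSemidef
  open scoped MatrixOrder in set S := CFC.sqrt (P⁻¹) with hSdef
  have hSS : S * S = P⁻¹ := by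
    open scoped MatrixOrder in exact CFC.sqrt_mul_sqrt_self (P⁻¹) hQs.nonneg
  have hSherm : Sᵀ = S := by
    have h : Sᴴ = S := by
      open scoped MatrixOrder in exact (CFC.sqrt_nonneg (P⁻¹)).posSemidef.isHermitian
    have hT : Sᴴ = Sᵀ := by
      ext i j; simp [Matrix.conjTranspose_apply, Matrix.transpose_apply]
    rw [← hT]; exact h
  -- S is invertible
  have hdetQ : (P⁻¹).det ≠ 0 := ne_of_gt hQ.det_pos
  have hdetS : S.det ≠ 0 := by
    intro h
    apply hdetQ
    rw [← hSS, Matrix.det_mul, h, mul_zero]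
  have hSinv : S * S⁻¹ = 1 := Matrix.mul_nonsing_inv S (Ne.isUnit hdetS)
  -- E = (B*S) * (B*S)ᵀ
  have hEA : E = (B * S) * (B * S)ᵀ := by
    rw [hE, Matrix.transpose_mul, hSherm, ← Matrix.mul_assoc, Matrix.mul_assoc B S S,
      hSS]
  -- E symmetric
  have hEsym : Eᵀ = E := by
    rw [hEA, Matrix.transpose_mul, Matrix.transpose_transpose]
  constructor
  · -- F = E * Ep
    have hFE : (E * Ep) * E = E := h1
    have hEF : E * (E * Ep) = E := by
      have hh : (E * (E * Ep))ᵀ = E := by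
        rw [Matrix.transpose_mul, h3, hEsym, h1]
      calc E * (E * Ep) = (E * (E * Ep))ᵀᵀ := by rw [Matrix.transpose_transpose]
        _ = Eᵀ := by rw [hh]
        _ = E := hEsym
    have key := proj_fix (E * Ep) E (B * S) h3 hFE hEF hEA
    have := congrArg (· * S⁻¹) key
    simpa [Matrix.mul_assoc, hSinv] using this
  · -- G = Ep * E
    have hEG : E * (Ep * E) = E := by rw [← Matrix.mul_assoc, h1]
    have hGE : (Ep * E) * E = E := by
      calc (Ep * E) * E = ((Ep * E) * E)ᵀᵀ := by rw [Matrix.transpose_transpose]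
        _ = (Eᵀ * (Ep * E)ᵀ)ᵀ := by rw [Matrix.transpose_mul]
        _ = (E * (Ep * E))ᵀ := by rw [hEsym, h4]
        _ = Eᵀ := by rw [hEG]
        _ = E := hEsym
    have key := proj_fix (Ep * E) E (B * S) h4 hGE hEG hEA
    have := congrArg (· * S⁻¹) key
    simpa [Matrix.mul_assoc, hSinv] using this
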